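/- Let R be a commutative ring and let M be a q×p matrix over R that is diagonalizable with divisibility chain p_0, …, p_{l-1}. Then for every natural number r with r < l, the r-determinantal ideal I_r(M) is the principal ideal of R generated by p_0·p_1⋯p_r, and for every r ≥ l it is the zero ideal. In particular, every determinantal ideal of a diagonalizable matrix is principal. -/

import Mathlib

/-- The `r`-determinantal ideal of a matrix `M`: the ideal generated by the determinants of
all `(r+1) × (r+1)` submatrices of `M`. -/
def detIdeal {R : Type*} [CommRing R] {ι κ : Type*} (M : Matrix ι κ R) (r : ℕ) : Ideal R :=
  Ideal.span { x | ∃ (f : Fin (r + 1) → ι) (g : Fin (r + 1) → κ),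
    Function.Injective f ∧ Function.Injective g ∧ x = (M.submatrix f g).det }

/-- The `q × p` block matrix whose upper-left `l × l` block is `Matrix.diagonal d` and whose
other blocks are zero. -/
noncomputable def blockDiag {R : Type*} [CommRing R] {q p l : ℕ} (hq : l ≤ q) (hp : l ≤ p)
    (d : Fin l → R) : Matrix (Fin q) (Fin p) R :=
  Matrix.reindex (finSumFinEquiv.trans (finCongr (Nat.add_sub_cancel' hq)))
    (finSumFinEquiv.trans (finCongr (Nat.add_sub_cancel' hp)))
    (Matrix.fromBlocks (Matrix.diagonal d) 0 0 0)

/-- A `q × p` matrix `M` over `R` is diagonalizable with divisibility chain `d 0, …, d (l-1)`: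
there are invertible matrices `P ∈ GL(q,R)` and `Q ∈ GL(p,R)` such that `P * M * Q` is the
block matrix with upper-left `l × l` block `diag (d 0, …, d (l-1))` and zero elsewhere, where
the `d i` are nonzero and `d i ∣ d (i+1)`. -/
def IsDiagonalizableWithChain {R : Type*} [CommRing R] {q p : ℕ}
    (M : Matrix (Fin q) (Fin p) R) (l : ℕ) (d : Fin l → R) : Prop :=
  ∃ (hq : l ≤ q) (hp : l ≤ p) (P : Matrix (Fin q) (Fin q) R) (Q : Matrix (Fin p) (Fin p) R),
    IsUnit P ∧ IsUnit Q ∧ (∀ i, d i ≠ 0) ∧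
    (∀ (i : Fin l) (hi : (i : ℕ) + 1 < l), d i ∣ d ⟨(i : ℕ) + 1, hi⟩) ∧
    P * M * Q = blockDiag hq hp d


open Matrix

section Aux
variable {R : Type*} [CommRing R]


lemma detIdeal_submatrix_le {ι κ ι' κ' : Type*} (M : Matrix ι κ R) (r : ℕ)
    (u : ι' → ι) (v : κ' → κ) (hu : Function.Injective u) (hv : Function.Injective v) :
    detIdeal (M.submatrix u v) r ≤ detIdeal M r := by
  rw [detIdeal, Ideal.span_le]
  rintro x ⟨f, g, hf, hg, rfl⟩
  exact Ideal.subset_span ⟨u ∘ f, v ∘ g, hu.comp hf, hv.comp hg, by simp⟩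

lemma detIdeal_submatrix_equiv {ι κ ι' κ' : Type*} (M : Matrix ι κ R) (r : ℕ)
    (u : ι' ≃ ι) (v : κ' ≃ κ) :
    detIdeal (M.submatrix u v) r = detIdeal M r := by
  refine le_antisymm (detIdeal_submatrix_le M r u v u.injective v.injective) ?_
  have : M = (M.submatrix u v).submatrix u.symm v.symm := by simp
  conv_lhs => rw [this]
  exact detIdeal_submatrix_le _ r _ _ u.symm.injective v.symm.injective

lemma detIdeal_transpose {ι κ : Type*} (M : Matrix ι κ R) (r : ℕ) :
    detIdeal Mᵀ r = detIdeal M r := by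
  unfold detIdeal
  congr 1
  ext x
  constructor <;> rintro ⟨f, g, hf, hg, rfl⟩
  · exact ⟨g, f, hg, hf, by rw [← Matrix.det_transpose (M.submatrix g f), transpose_submatrix]⟩
  · exact ⟨g, f, hg, hf, by rw [← Matrix.det_transpose (Mᵀ.submatrix g f), transpose_submatrix,
      transpose_transpose]⟩

lemma detIdeal_mul_left_le {ι κ n : Type*} [Fintype n] (A : Matrix ι n R)
    (M : Matrix n κ R) (r : ℕ) :
    detIdeal (A * M) r ≤ detIdeal M r := by
  classical
  rw [detIdeal, Ideal.span_le]
  rintro x ⟨f, g, hf, hg, rfl⟩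
  have h1 : ((A * M).submatrix f g)
      = fun i => ∑ k : n, A (f i) k • (M.submatrix id g) k := by
    ext i j
    simp [Matrix.mul_apply, Finset.sum_apply]
  have h2 : ((A * M).submatrix f g).det
      = ∑ k : Fin (r + 1) → n, (∏ i, A (f i) (k i)) • (M.submatrix k g).det := by
    show Matrix.detRowAlternating ((A * M).submatrix f g) = _
    rw [h1]
    have hms := (Matrix.detRowAlternating :
      (Fin (r+1) → R) [⋀^Fin (r+1)]→ₗ[R] R).toMultilinearMap.map_sum
      (α := fun _ : Fin (r+1) => n) (g := fun i k => A (f i) k • (M.submatrix id g) k)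
    rw [show ((Matrix.detRowAlternating :
        (Fin (r+1) → R) [⋀^Fin (r+1)]→ₗ[R] R) fun i => ∑ k : n, A (f i) k • M.submatrix id g k)
      = ((Matrix.detRowAlternating :
        (Fin (r+1) → R) [⋀^Fin (r+1)]→ₗ[R] R).toMultilinearMap fun i => ∑ k : n,
        (fun i k => A (f i) k • (M.submatrix id g) k) i k) from rfl, hms]
    refine Finset.sum_congr rfl fun k _ => ?_
    exact MultilinearMap.map_smul_univ _ (fun i => A (f i) (k i)) (fun i => (M.submatrix id g) (k i))
  rw [h2]
  refine Ideal.sum_mem _ fun k _ => ?_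
  by_cases hk : Function.Injective k
  · rw [smul_eq_mul]
    exact Ideal.mul_mem_left _ _ (Ideal.subset_span ⟨k, g, hk, hg, rfl⟩)
  · rw [Function.not_injective_iff] at hk
    obtain ⟨i, j, hij, hne⟩ := hk
    have : (M.submatrix k g).det = 0 :=
      Matrix.det_zero_of_row_eq hne (by funext t; simp [hij])
    rw [this, smul_zero]
    exact Ideal.zero_mem _

lemma detIdeal_mul_right_le {ι κ n : Type*} [Fintype n] (M : Matrix ι n R)
    (B : Matrix n κ R) (r : ℕ) :
    detIdeal (M * B) r ≤ detIdeal M r := by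
  rw [← detIdeal_transpose (M * B), ← detIdeal_transpose M, Matrix.transpose_mul]
  exact detIdeal_mul_left_le _ _ r

lemma detIdeal_unit_mul {q p : ℕ} (M : Matrix (Fin q) (Fin p) R)
    (P : Matrix (Fin q) (Fin q) R) (Q : Matrix (Fin p) (Fin p) R)
    (hP : IsUnit P) (hQ : IsUnit Q) (r : ℕ) :
    detIdeal (P * M * Q) r = detIdeal M r := by
  obtain ⟨u, rfl⟩ := hP
  obtain ⟨v, rfl⟩ := hQ
  refine le_antisymm ((detIdeal_mul_right_le _ _ _).trans (detIdeal_mul_left_le _ _ _)) ?_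
  have hM : (↑(u⁻¹) : Matrix (Fin q) (Fin q) R) * ((↑u : Matrix (Fin q) (Fin q) R) * M *
      (↑v : Matrix (Fin p) (Fin p) R)) * (↑(v⁻¹) : Matrix (Fin p) (Fin p) R) = M := by
    have h1 : (↑(u⁻¹) : Matrix (Fin q) (Fin q) R) * (↑u : Matrix (Fin q) (Fin q) R) = 1 := u.inv_mul
    have h2 : (↑v : Matrix (Fin p) (Fin p) R) * (↑(v⁻¹) : Matrix (Fin p) (Fin p) R) = 1 := v.mul_inv
    simp only [← Matrix.mul_assoc]
    rw [h1, Matrix.one_mul, Matrix.mul_assoc, h2, Matrix.mul_one]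
  conv_lhs => rw [← hM]
  exact (detIdeal_mul_right_le _ _ _).trans (detIdeal_mul_left_le _ _ _)

lemma chain_dvd {l : ℕ} (d : Fin l → R)
    (hc : ∀ (i : Fin l) (hi : (i : ℕ) + 1 < l), d i ∣ d ⟨(i : ℕ) + 1, hi⟩) :
    ∀ (n : ℕ) (hn : n < l) (i : Fin l), (i : ℕ) ≤ n → d i ∣ d ⟨n, hn⟩ := by
  intro n
  induction n with
  | zero =>
    intro hn i hi
    have : i = ⟨0, hn⟩ := Fin.ext (Nat.le_zero.1 hi)
    rw [this]
  | succ n ih =>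
    intro hn i hi
    rcases Nat.lt_or_ge (i : ℕ) (n + 1) with hlt | hge
    · exact (ih (Nat.lt_of_succ_lt hn) i (Nat.lt_succ_iff.1 hlt)).trans
        (hc ⟨n, Nat.lt_of_succ_lt hn⟩ hn)
    · have : i = ⟨n + 1, hn⟩ := Fin.ext (le_antisymm hi hge)
      rw [this]

lemma strictMono_val_le {m l : ℕ} {s : Fin m → Fin l} (hs : StrictMono s) (i : Fin m) :
    (i : ℕ) ≤ (s i : ℕ) := by
  suffices h : ∀ (n : ℕ) (i : Fin m), (i : ℕ) = n → n ≤ (s i : ℕ) from h i i rfl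
  intro n
  induction n with
  | zero => intro i _; omega
  | succ n ih =>
    intro i hi
    have hnm : n < m := by omega
    have hlt : (⟨n, hnm⟩ : Fin m) < i := by rw [Fin.lt_def]; simpa using by omega
    have h1 := ih ⟨n, hnm⟩ rfl
    have h2 := hs hlt
    rw [Fin.lt_def] at h2
    omega

lemma prod_min_dvd {l k : ℕ} (d : Fin l → R)
    (hc : ∀ (i : Fin l) (hi : (i : ℕ) + 1 < l), d i ∣ d ⟨(i : ℕ) + 1, hi⟩)
    (hk : k ≤ l) (f' : Fin k → Fin l) (hf : Function.Injective f') :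
    (∏ i : Fin k, d (Fin.castLE hk i)) ∣ ∏ i : Fin k, d (f' i) := by
  classical
  set S := Finset.univ.image f' with hS
  have hcard : S.card = k := by
    rw [hS, Finset.card_image_of_injective _ hf, Finset.card_univ, Fintype.card_fin]
  have h1 : ∏ i : Fin k, d (f' i) = ∏ j ∈ S, d j :=
    (Finset.prod_image (fun a _ b _ h => hf h)).symm
  have h2 : ∏ j ∈ S, d j = ∏ i : Fin k, d ((S.orderIsoOfFin hcard i : Fin l)) := by
    rw [← Finset.prod_coe_sort S d]
    exact (Equiv.prod_comp (S.orderIsoOfFin hcard).toEquiv (fun x => d (x : Fin l))).symm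
  rw [h1, h2]
  refine Finset.prod_dvd_prod_of_dvd _ _ fun i _ => ?_
  have hm : StrictMono (fun i => ((S.orderIsoOfFin hcard i : Fin l))) := fun a b hab =>
    Subtype.coe_lt_coe.2 ((S.orderIsoOfFin hcard).lt_iff_lt.2 hab)
  have hle : ((Fin.castLE hk i : Fin l) : ℕ) ≤ ((S.orderIsoOfFin hcard i : Fin l) : ℕ) :=
    strictMono_val_le hm i
  have := chain_dvd d hc ((S.orderIsoOfFin hcard i : Fin l) : ℕ)
    (S.orderIsoOfFin hcard i : Fin l).isLt (Fin.castLE hk i) hle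
  simpa using this

lemma diag_det_cases {l k : ℕ} (d : Fin l → R) (f' g' : Fin k → Fin l)
    (hf : Function.Injective f') (hg : Function.Injective g') :
    ((Matrix.diagonal d).submatrix f' g').det = 0 ∨
      (∏ i : Fin k, d (f' i)) ∣ ((Matrix.diagonal d).submatrix f' g').det := by
  classical
  by_cases hrange : ∀ j, g' j ∈ Set.range f'
  · right
    have hinj : Function.Injective (fun j => (Equiv.ofInjective f' hf).symm ⟨g' j, hrange j⟩) := by
      intro a b hab
      apply hg
      have h := congrArg (fun x => ((Equiv.ofInjective f' hf) x : Fin l)) hab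
      simpa using h
    let σ : Equiv.Perm (Fin k) := Equiv.ofBijective _ (Finite.injective_iff_bijective.1 hinj)
    have hfe : ∀ j, f' (σ j) = g' j := fun j => by
      show f' ((Equiv.ofInjective f' hf).symm ⟨g' j, hrange j⟩) = g' j
      exact congrArg Subtype.val ((Equiv.ofInjective f' hf).apply_symm_apply ⟨g' j, hrange j⟩)
    have key : (Matrix.diagonal d).submatrix f' g'
        = ((Matrix.diagonal d).submatrix f' f').submatrix id σ := by
      ext i j
      simp [Matrix.submatrix_apply, hfe j]
    rw [key, Matrix.det_permute', Matrix.submatrix_diagonal d f' hf, Matrix.det_diagonal]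
    exact Dvd.dvd.mul_left (dvd_refl _) _
  · left
    push_neg at hrange
    obtain ⟨j, hj⟩ := hrange
    refine Matrix.det_eq_zero_of_column_eq_zero j fun i => ?_
    have hne : f' i ≠ g' j := fun he => hj ⟨i, he⟩
    simp [Matrix.submatrix_apply, Matrix.diagonal_apply_ne _ hne]


lemma fromBlocks_det_cases {l a b k : ℕ} (d : Fin l → R)
    (f : Fin k → Fin l ⊕ Fin a) (g : Fin k → Fin l ⊕ Fin b)
    (hf : Function.Injective f) (hg : Function.Injective g) :
    ((Matrix.fromBlocks (Matrix.diagonal d) 0 0 0 :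
        Matrix (Fin l ⊕ Fin a) (Fin l ⊕ Fin b) R).submatrix f g).det = 0 ∨
    ∃ f' g' : Fin k → Fin l, Function.Injective f' ∧ Function.Injective g' ∧
      ((Matrix.fromBlocks (Matrix.diagonal d) 0 0 0 :
        Matrix (Fin l ⊕ Fin a) (Fin l ⊕ Fin b) R).submatrix f g).det
        = ((Matrix.diagonal d).submatrix f' g').det := by
  classical
  by_cases hfl : ∀ i, ∃ x, f i = Sum.inl x
  · by_cases hgl : ∀ j, ∃ x, g j = Sum.inl x
    · choose f' hf' using hfl
      choose g' hg' using hgl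
      right
      have hfi : Function.Injective f' := fun i j hij => hf (by rw [hf' i, hf' j, hij])
      have hgi : Function.Injective g' := fun i j hij => hg (by rw [hg' i, hg' j, hij])
      refine ⟨f', g', hfi, hgi, ?_⟩
      congr 1
      ext i j
      rw [Matrix.submatrix_apply, Matrix.submatrix_apply, hf' i, hg' j]
      rfl
    · left
      push_neg at hgl
      obtain ⟨j, hj⟩ := hgl
      obtain ⟨y, hy⟩ : ∃ y, g j = Sum.inr y := by
        cases hgj' : g j with
        | inl x => exact absurd hgj' (hj x)
        | inr y => exact ⟨y, rfl⟩
      refine Matrix.det_eq_zero_of_column_eq_zero j fun i => ?_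
      rw [Matrix.submatrix_apply, hy]
      cases f i <;> simp
  · left
    push_neg at hfl
    obtain ⟨i, hi⟩ := hfl
    obtain ⟨y, hy⟩ : ∃ y, f i = Sum.inr y := by
      cases hfi' : f i with
      | inl x => exact absurd hfi' (hi x)
      | inr y => exact ⟨y, rfl⟩
    refine Matrix.det_eq_zero_of_row_eq_zero i fun j => ?_
    rw [Matrix.submatrix_apply, hy]
    cases g j <;> simp

end Aux

/-- Every determinantal ideal of a diagonalizable matrix is principal:
`I_r M = ⟨d 0 ⋯ d r⟩` for `r < l` and `I_r M = 0` for `r ≥ l`. -/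
theorem detIdeal_of_isDiagonalizableWithChain {R : Type*} [CommRing R] {q p : ℕ}
    (M : Matrix (Fin q) (Fin p) R) (l : ℕ) (d : Fin l → R)
    (h : IsDiagonalizableWithChain M l d) :
    (∀ (r : ℕ) (hr : r < l), detIdeal M r =
      Ideal.span {∏ i : Fin (r + 1), d (Fin.castLE hr i)}) ∧
    (∀ r : ℕ, l ≤ r → detIdeal M r = ⊥) := by
  classical
  obtain ⟨hq, hp, P, Q, hP, hQ, hd0, hchain, hPQ⟩ := h
  set N : Matrix (Fin l ⊕ Fin (q - l)) (Fin l ⊕ Fin (p - l)) R :=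
    Matrix.fromBlocks (Matrix.diagonal d) 0 0 0 with hN
  have hMN : ∀ r, detIdeal M r = detIdeal N r := by
    intro r
    rw [← detIdeal_unit_mul M P Q hP hQ r, hPQ]
    unfold _root_.blockDiag
    rw [Matrix.reindex_apply]
    exact detIdeal_submatrix_equiv _ r _ _
  constructor
  · intro r hr
    rw [hMN r]
    apply le_antisymm
    · rw [detIdeal, Ideal.span_le]
      rintro x ⟨f, g, hf, hg, rfl⟩
      rw [SetLike.mem_coe, Ideal.mem_span_singleton]
      rcases fromBlocks_det_cases d f g hf hg with h0 | ⟨f', g', hfi, hgi, heq⟩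
      · rw [h0]; exact dvd_zero _
      · rw [heq]
        rcases diag_det_cases d f' g' hfi hgi with h0 | hdvd
        · rw [h0]; exact dvd_zero _
        · exact dvd_trans (prod_min_dvd d hchain hr f' hfi) hdvd
    · rw [Ideal.span_le, Set.singleton_subset_iff, SetLike.mem_coe]
      refine Ideal.subset_span ⟨Sum.inl ∘ Fin.castLE hr, Sum.inl ∘ Fin.castLE hr,
        Sum.inl_injective.comp (Fin.castLE_injective hr),
        Sum.inl_injective.comp (Fin.castLE_injective hr), ?_⟩
      have hsub : N.submatrix (Sum.inl ∘ Fin.castLE hr) (Sum.inl ∘ Fin.castLE hr)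
          = (Matrix.diagonal d).submatrix (Fin.castLE hr) (Fin.castLE hr) := by
        ext i j
        simp [hN]
      rw [hsub, Matrix.submatrix_diagonal d _ (Fin.castLE_injective hr), Matrix.det_diagonal]
      rfl
  · intro r hlr
    rw [hMN r, ← le_bot_iff, detIdeal, Ideal.span_le]
    rintro x ⟨f, g, hf, hg, rfl⟩
    rcases fromBlocks_det_cases d f g hf hg with h0 | ⟨f', g', hfi, hgi, heq⟩
    · simp [h0]; exact h0
    · exfalso
      have hcard := Fintype.card_le_of_injective f' hfi
      simp only [Fintype.card_fin] at hcard
      omega
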